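/- (Theorem 2, with normalization constants made precise) Let X₂ be a nonempty finite set of real numbers. Let P_i and P_j be joint distributions on X₁ × X₂ × {0,1} with P_i(x₁,x₂) > 0 and P_j(x₁,x₂) > 0 for all (x₁,x₂), and suppose each of α_j^i, α_i^j, α_i^i, α_j^j lies strictly between 0 and 1. Assume the Y-marginals of P_i, P_j and of the partition distributions P_j^{i×}, P_j^{i✓}, P_i^{i✓}, P_i^{j×}, P_i^{j✓}, P_j^{j✓} are all uniform. If Cov(X₂,Y;P_i) > Cov(X₂,Y;P_j), then Cov(X₂,Y;P_j^{i×}) < (α_i^i/(1−α_j^i))·Cov(X₂,Y;P_i^{i✓}) − (α_j^i/(1−α_j^i))·Cov(X₂,Y;P_j^{i✓}), and Cov(X₂,Y;P_i^{j×}) > (α_j^j/(1−α_i^j))·Cov(X₂,Y;P_j^{j✓}) − (α_i^j/(1−α_i^j))·Cov(X₂,Y;P_i^{j✓}). -/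

import Mathlib

open Finset

/-- A (joint) distribution on a finite type: nonnegative and summing to 1. -/
def IsDist {S : Type*} [Fintype S] (P : S → ℝ) : Prop :=
  (∀ s, 0 ≤ P s) ∧ ∑ s, P s = 1

/-- The (X₁, X₂)-marginal `P(x₁, x₂) = P(x₁,x₂,0) + P(x₁,x₂,1)`. -/
def margXY {X₁ X₂ : Type*} (P : X₁ × X₂ × Fin 2 → ℝ) (x₁ : X₁) (x₂ : X₂) : ℝ :=
  P (x₁, x₂, 0) + P (x₁, x₂, 1)

/-- The conditional `P(y | x₁, x₂) = P(x₁,x₂,y) / P(x₁,x₂)`. -/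
noncomputable def condY {X₁ X₂ : Type*} (P : X₁ × X₂ × Fin 2 → ℝ)
    (y : Fin 2) (x₁ : X₁) (x₂ : X₂) : ℝ :=
  P (x₁, x₂, y) / margXY P x₁ x₂

/-- `α_j^i = Σ_{x₁,x₂,y} P_j(x₁,x₂,y) · P_i(y | x₁,x₂)`,
the probability that the classifier derived from `Pi` is correct on `Pj`. -/
noncomputable def alphaP {X₁ X₂ : Type*} [Fintype X₁] [Fintype X₂]
    (Pi' Pj' : X₁ × X₂ × Fin 2 → ℝ) : ℝ :=
  ∑ x₁ : X₁, ∑ x₂ : X₂, ∑ y : Fin 2, Pj' (x₁, x₂, y) * condY Pi' y x₁ x₂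

/-- The correct-prediction partition `P_j^{i✓}(x₁,x₂,y) = P_j(x₁,x₂,y)·P_i(y|x₁,x₂)/α_j^i`. -/
noncomputable def partC {X₁ X₂ : Type*} [Fintype X₁] [Fintype X₂]
    (Pi' Pj' : X₁ × X₂ × Fin 2 → ℝ) (z : X₁ × X₂ × Fin 2) : ℝ :=
  Pj' z * condY Pi' z.2.2 z.1 z.2.1 / alphaP Pi' Pj'

/-- The wrong-prediction partition `P_j^{i×}(x₁,x₂,y) = P_j(x₁,x₂,y)·P_i(1−y|x₁,x₂)/(1−α_j^i)`. -/
noncomputable def partW {X₁ X₂ : Type*} [Fintype X₁] [Fintype X₂]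
    (Pi' Pj' : X₁ × X₂ × Fin 2 → ℝ) (z : X₁ × X₂ × Fin 2) : ℝ :=
  Pj' z * condY Pi' (1 - z.2.2) z.1 z.2.1 / (1 - alphaP Pi' Pj')

/-- `Cov(X₂, Y; P)` where the value of `x₂` is `v x₂` and `y ∈ {0,1} ⊆ ℝ`. -/
noncomputable def covXY {X₁ X₂ : Type*} [Fintype X₁] [Fintype X₂] (v : X₂ → ℝ)
    (P : X₁ × X₂ × Fin 2 → ℝ) : ℝ :=
  (∑ z : X₁ × X₂ × Fin 2, v z.2.1 * ((z.2.2 : ℕ) : ℝ) * P z)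
    - (∑ z : X₁ × X₂ × Fin 2, v z.2.1 * P z)
      * (∑ z : X₁ × X₂ × Fin 2, ((z.2.2 : ℕ) : ℝ) * P z)

/-- The Y-marginal of `P` is uniform. -/
def uniformY {X₁ X₂ : Type*} [Fintype X₁] [Fintype X₂] (P : X₁ × X₂ × Fin 2 → ℝ) : Prop :=
  ∀ y : Fin 2, ∑ x₁ : X₁, ∑ x₂ : X₂, P (x₁, x₂, y) = 1 / 2

/-- Under a uniform Y-marginal, `P(x₂ | y) = 2 · Σ_{x₁} P(x₁,x₂,y)`. -/
noncomputable def condX2Y {X₁ X₂ : Type*} [Fintype X₁] (P : X₁ × X₂ × Fin 2 → ℝ)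
    (x₂ : X₂) (y : Fin 2) : ℝ :=
  2 * ∑ x₁ : X₁, P (x₁, x₂, y)

/-- `X₂` is independent of `X₁` given `Y` under `P`. -/
def condIndep {X₁ X₂ : Type*} [Fintype X₁] [Fintype X₂] (P : X₁ × X₂ × Fin 2 → ℝ) : Prop :=
  ∀ (x₁ : X₁) (x₂ : X₂) (y : Fin 2),
    P (x₁, x₂, y) * (∑ x₁' : X₁, ∑ x₂' : X₂, P (x₁', x₂', y))
      = (∑ x₂' : X₂, P (x₁, x₂', y)) * (∑ x₁' : X₁, P (x₁', x₂, y))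


section Aux
variable {X₁ X₂ : Type*} [Fintype X₁] [Fintype X₂]

lemma condY_sum (P : X₁ × X₂ × Fin 2 → ℝ) (hpos : ∀ x₁ x₂, 0 < margXY P x₁ x₂)
    (y : Fin 2) (x₁ : X₁) (x₂ : X₂) :
    condY P y x₁ x₂ + condY P (1 - y) x₁ x₂ = 1 := by
  have h := (hpos x₁ x₂).ne'
  have hy : y = 0 ∨ y = 1 := by omega
  rcases hy with rfl | rfl <;>
  · unfold condY
    rw [← add_div, div_eq_one_iff_eq h]
    simp only [sub_zero, sub_self]
    first
      | rfl
      | (unfold margXY; ring)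

lemma decomp (Pi' Pj' : X₁ × X₂ × Fin 2 → ℝ) (hpos : ∀ x₁ x₂, 0 < margXY Pi' x₁ x₂)
    (h0 : 0 < alphaP Pi' Pj') (h1 : alphaP Pi' Pj' < 1) (z : X₁ × X₂ × Fin 2) :
    Pj' z = alphaP Pi' Pj' * partC Pi' Pj' z + (1 - alphaP Pi' Pj') * partW Pi' Pj' z := by
  unfold partC partW
  have hα : alphaP Pi' Pj' ≠ 0 := h0.ne'
  have hα1 : (1 : ℝ) - alphaP Pi' Pj' ≠ 0 := by linarith
  have hc := condY_sum Pi' hpos z.2.2 z.1 z.2.1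
  field_simp
  linear_combination (-(Pj' z)) * hc

lemma sum_partC (Pi' Pj' : X₁ × X₂ × Fin 2 → ℝ) (h0 : alphaP Pi' Pj' ≠ 0) :
    ∑ z : X₁ × X₂ × Fin 2, partC Pi' Pj' z = 1 := by
  unfold partC
  rw [← Finset.sum_div, div_eq_one_iff_eq h0]
  rw [Fintype.sum_prod_type]
  simp_rw [Fintype.sum_prod_type]
  rfl

lemma sum_partW (Pi' Pj' : X₁ × X₂ × Fin 2 → ℝ) (hpos : ∀ x₁ x₂, 0 < margXY Pi' x₁ x₂)
    (hPj' : IsDist Pj') (h0 : 0 < alphaP Pi' Pj') (h1 : alphaP Pi' Pj' < 1) :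
    ∑ z : X₁ × X₂ × Fin 2, partW Pi' Pj' z = 1 := by
  have hd := decomp Pi' Pj' hpos h0 h1
  have hsum : ∑ z : X₁ × X₂ × Fin 2, Pj' z = 1 := hPj'.2
  have hC := sum_partC Pi' Pj' h0.ne'
  simp_rw [hd] at hsum
  rw [Finset.sum_add_distrib, ← Finset.mul_sum, ← Finset.mul_sum, hC, mul_one] at hsum
  have h2 : (1 - alphaP Pi' Pj') * (∑ z : X₁ × X₂ × Fin 2, partW Pi' Pj' z)
      = (1 - alphaP Pi' Pj') * 1 := by rw [mul_one]; linarith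
  exact mul_left_cancel₀ (by linarith) h2

lemma sumY_eq (Q : X₁ × X₂ × Fin 2 → ℝ) (hQ : uniformY Q) :
    ∑ z : X₁ × X₂ × Fin 2, ((z.2.2 : ℕ) : ℝ) * Q z = 1 / 2 := by
  rw [Fintype.sum_prod_type]
  simp_rw [Fintype.sum_prod_type, Fin.sum_univ_two]
  simpa using hQ 1

lemma cov_mix (v : X₂ → ℝ) (P Q R : X₁ × X₂ × Fin 2 → ℝ) (a : ℝ)
    (hP : ∀ z, P z = a * Q z + (1 - a) * R z)
    (hQ : uniformY Q) (hR : uniformY R) :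
    covXY v P = a * covXY v Q + (1 - a) * covXY v R := by
  have hQy := sumY_eq Q hQ
  have hRy := sumY_eq R hR
  unfold covXY
  have key : ∀ (f : X₁ × X₂ × Fin 2 → ℝ),
      ∑ z : X₁ × X₂ × Fin 2, f z * P z
        = a * (∑ z : X₁ × X₂ × Fin 2, f z * Q z)
          + (1 - a) * (∑ z : X₁ × X₂ × Fin 2, f z * R z) := by
    intro f
    rw [Finset.mul_sum, Finset.mul_sum, ← Finset.sum_add_distrib]
    exact Finset.sum_congr rfl fun z _ => by rw [hP z]; ring
  rw [key (fun z => v z.2.1 * ((z.2.2 : ℕ) : ℝ)), key (fun z => v z.2.1),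
      key (fun z => ((z.2.2 : ℕ) : ℝ)), hQy, hRy]
  ring

lemma cov_of_symm (v : X₂ → ℝ) (W : X₁ × X₂ × Fin 2 → ℝ)
    (hsymm : ∀ x₁ x₂, W (x₁, x₂, 0) = W (x₁, x₂, 1))
    (htot : ∑ z : X₁ × X₂ × Fin 2, W z = 1) :
    covXY v W = 0 := by
  unfold covXY
  rw [Fintype.sum_prod_type] at htot
  simp only [Fintype.sum_prod_type, Fin.sum_univ_two] at htot ⊢
  simp only [Fin.val_zero, Fin.val_one, Nat.cast_zero, Nat.cast_one, mul_zero, zero_mul,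
    mul_one, one_mul, zero_add, add_zero] at htot ⊢
  simp_rw [hsymm] at htot ⊢
  simp only [Finset.sum_add_distrib] at htot ⊢
  set A := ∑ x₁ : X₁, ∑ x₂ : X₂, W (x₁, x₂, 1) with hA
  set B := ∑ x₁ : X₁, ∑ x₂ : X₂, v x₂ * W (x₁, x₂, 1) with hB
  linear_combination (-B) * htot

lemma partW_self_symm (P : X₁ × X₂ × Fin 2 → ℝ) (x₁ : X₁) (x₂ : X₂) :
    partW P P (x₁, x₂, 0) = partW P P (x₁, x₂, 1) := by
  unfold partW condY
  norm_num
  ring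

lemma uniformY_partW_self (P : X₁ × X₂ × Fin 2 → ℝ) (hpos : ∀ x₁ x₂, 0 < margXY P x₁ x₂)
    (hP : IsDist P) (h0 : 0 < alphaP P P) (h1 : alphaP P P < 1) :
    uniformY (partW P P) := by
  have htot := sum_partW P P hpos hP h0 h1
  rw [Fintype.sum_prod_type] at htot
  simp only [Fintype.sum_prod_type, Fin.sum_univ_two] at htot
  simp_rw [partW_self_symm P] at htot
  simp only [Finset.sum_add_distrib] at htot
  intro y
  have hy : y = 0 ∨ y = 1 := by omega
  rcases hy with rfl | rfl
  · simp_rw [partW_self_symm P]; linarith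
  · linarith

lemma cov_self_eq (v : X₂ → ℝ) (P : X₁ × X₂ × Fin 2 → ℝ)
    (hpos : ∀ x₁ x₂, 0 < margXY P x₁ x₂) (hP : IsDist P)
    (h0 : 0 < alphaP P P) (h1 : alphaP P P < 1)
    (huC : uniformY (partC P P)) :
    covXY v P = alphaP P P * covXY v (partC P P) := by
  have huW := uniformY_partW_self P hpos hP h0 h1
  have := cov_mix v P (partC P P) (partW P P) (alphaP P P) (decomp P P hpos h0 h1) huC huW
  rw [cov_of_symm v (partW P P) (partW_self_symm P) (sum_partW P P hpos hP h0 h1)] at this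
  linarith

lemma covW_eq (v : X₂ → ℝ) (Pi' Pj' : X₁ × X₂ × Fin 2 → ℝ)
    (hpos : ∀ x₁ x₂, 0 < margXY Pi' x₁ x₂)
    (h0 : 0 < alphaP Pi' Pj') (h1 : alphaP Pi' Pj' < 1)
    (hu1 : uniformY (partW Pi' Pj')) (hu2 : uniformY (partC Pi' Pj')) :
    covXY v (partW Pi' Pj') * (1 - alphaP Pi' Pj')
      = covXY v Pj' - alphaP Pi' Pj' * covXY v (partC Pi' Pj') := by
  have := cov_mix v Pj' (partC Pi' Pj') (partW Pi' Pj') (alphaP Pi' Pj')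
    (decomp Pi' Pj' hpos h0 h1) hu2 hu1
  linear_combination -this

end Aux

/-- Theorem 2, with normalization constants made precise. -/
theorem stmt9 {X₁ : Type*} [Fintype X₁] [Nonempty X₁] (S : Finset ℝ) (hS : S.Nonempty)
    (Pi' Pj' : X₁ × ↥S × Fin 2 → ℝ) (hPi' : IsDist Pi') (hPj' : IsDist Pj')
    (hposi : ∀ x₁ x₂, 0 < margXY Pi' x₁ x₂) (hposj : ∀ x₁ x₂, 0 < margXY Pj' x₁ x₂)
    (hαji0 : 0 < alphaP Pi' Pj') (hαji1 : alphaP Pi' Pj' < 1)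
    (hαij0 : 0 < alphaP Pj' Pi') (hαij1 : alphaP Pj' Pi' < 1)
    (hαii0 : 0 < alphaP Pi' Pi') (hαii1 : alphaP Pi' Pi' < 1)
    (hαjj0 : 0 < alphaP Pj' Pj') (hαjj1 : alphaP Pj' Pj' < 1)
    (hui : uniformY Pi') (huj : uniformY Pj')
    (hu1 : uniformY (partW Pi' Pj')) (hu2 : uniformY (partC Pi' Pj'))
    (hu3 : uniformY (partC Pi' Pi')) (hu4 : uniformY (partW Pj' Pi'))
    (hu5 : uniformY (partC Pj' Pi')) (hu6 : uniformY (partC Pj' Pj'))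
    (hcov : covXY (fun x : ↥S => (x : ℝ)) Pi' > covXY (fun x : ↥S => (x : ℝ)) Pj') :
    covXY (fun x : ↥S => (x : ℝ)) (partW Pi' Pj')
      < (alphaP Pi' Pi' / (1 - alphaP Pi' Pj')) * covXY (fun x : ↥S => (x : ℝ)) (partC Pi' Pi')
        - (alphaP Pi' Pj' / (1 - alphaP Pi' Pj')) * covXY (fun x : ↥S => (x : ℝ)) (partC Pi' Pj') ∧
    covXY (fun x : ↥S => (x : ℝ)) (partW Pj' Pi')
      > (alphaP Pj' Pj' / (1 - alphaP Pj' Pi')) * covXY (fun x : ↥S => (x : ℝ)) (partC Pj' Pj')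
        - (alphaP Pj' Pi' / (1 - alphaP Pj' Pi')) * covXY (fun x : ↥S => (x : ℝ)) (partC Pj' Pi') := by
  set v : ↥S → ℝ := fun x : ↥S => (x : ℝ) with hv
  have Ei := cov_self_eq v Pi' hposi hPi' hαii0 hαii1 hu3
  have Ej := cov_self_eq v Pj' hposj hPj' hαjj0 hαjj1 hu6
  have Wji := covW_eq v Pi' Pj' hposi hαji0 hαji1 hu1 hu2
  have Wij := covW_eq v Pj' Pi' hposj hαij0 hαij1 hu4 hu5
  constructor
  · rw [div_mul_eq_mul_div, div_mul_eq_mul_div, div_sub_div_same,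
      lt_div_iff₀ (by linarith : (0:ℝ) < 1 - alphaP Pi' Pj')]
    linarith [Wji, Ei, hcov]
  · rw [gt_iff_lt, div_mul_eq_mul_div, div_mul_eq_mul_div, div_sub_div_same,
      div_lt_iff₀ (by linarith : (0:ℝ) < 1 - alphaP Pj' Pi')]
    linarith [Wij, Ej, hcov]
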